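/- Let Q be a quiver of simply laced Dynkin type, M an indecomposable kQ-module with dimension vector dim M = Σ_i m_i · dim S_i, and fix a vertex i. Let N ⊆ M be any submodule. Then ⟨dim N, dim S_i⟩ + ⟨dim S_i, dim(M/N)⟩ ≤ m_i, where ⟨−,−⟩ is the Euler form. Moreover, for each vertex i there exists a submodule N of M for which equality holds. -/

import Mathlib

open scoped BigOperators

/-- A finite-dimensional representation of the quiver with vertex set `V`, arrow set `E`,
source map `s` and target map `t`, over the field `k` (i.e. a `kQ`-module). -/
structure QuiverRep (k : Type) [Field k] (V E : Type) (s t : E → V) where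
  carrier : V → Type
  [acg : ∀ v, AddCommGroup (carrier v)]
  [mod : ∀ v, Module k (carrier v)]
  [fd : ∀ v, FiniteDimensional k (carrier v)]
  map : ∀ e : E, carrier (s e) →ₗ[k] carrier (t e)

namespace QuiverRep

attribute [instance] QuiverRep.acg QuiverRep.mod QuiverRep.fd

variable {k V E : Type} [Field k] {s t : E → V}

/-- The dimension vector of a representation. -/
noncomputable def dimv [Fintype V] (M : QuiverRep k V E s t) : V → ℕ :=
  fun v => Module.finrank k (M.carrier v)

/-- A subrepresentation: a family of subspaces closed under the structure maps. -/
structure Sub (M : QuiverRep k V E s t) where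
  S : ∀ v, Submodule k (M.carrier v)
  compat : ∀ (e : E) (x : M.carrier (s e)), x ∈ S (s e) → M.map e x ∈ S (t e)

/-- The dimension vector of a subrepresentation. -/
noncomputable def Sub.dimv {M : QuiverRep k V E s t} (N : Sub M) : V → ℕ :=
  fun v => Module.finrank k (N.S v)

/-- A subrepresentation as a representation. -/
def Sub.toRep {M : QuiverRep k V E s t} (N : Sub M) : QuiverRep k V E s t where
  carrier v := N.S v
  map e := (M.map e).restrict (fun x hx => N.compat e x hx)

/-- The quotient representation `M/N`. -/
def Sub.quotRep {M : QuiverRep k V E s t} (N : Sub M) : QuiverRep k V E s t where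
  carrier v := M.carrier v ⧸ N.S v
  map e := Submodule.mapQ (N.S (s e)) (N.S (t e)) (M.map e) (fun x hx => N.compat e x hx)

/-- An endomorphism of a representation. -/
structure Endo (M : QuiverRep k V E s t) where
  f : ∀ v, M.carrier v →ₗ[k] M.carrier v
  comm : ∀ e : E, (f (t e)).comp (M.map e) = (M.map e).comp (f (s e))

/-- A representation is indecomposable iff it is nonzero and its only idempotent
endomorphisms are `0` and `1`. -/
def Indec (M : QuiverRep k V E s t) : Prop :=
  (∃ v, Module.finrank k (M.carrier v) ≠ 0) ∧
    ∀ φ : Endo M, (∀ v, (φ.f v).comp (φ.f v) = φ.f v) →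
      (∀ v, φ.f v = 0) ∨ (∀ v, φ.f v = LinearMap.id)

/-- An isomorphism of representations. -/
def Iso (M N : QuiverRep k V E s t) : Prop :=
  ∃ g : ∀ v, M.carrier v ≃ₗ[k] N.carrier v,
    ∀ (e : E) (x : M.carrier (s e)), g (t e) (M.map e x) = N.map e (g (s e) x)

/-- The Euler form of the quiver `(V, E, s, t)`:
`⟨d, e⟩ = Σ_v d_v e_v − Σ_{a : E} d_{s a} e_{t a}`;
for finite-dimensional representations it satisfies
`⟨dim M, dim N⟩ = dim Hom(M,N) − dim Ext¹(M,N)`. -/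
def euler [Fintype V] [Fintype E] (s t : E → V) (d e : V → ℤ) : ℤ :=
  (∑ v, d v * e v) - ∑ a : E, d (s a) * e (t a)

end QuiverRep

open QuiverRep

section Aux

open Relation

variable {V E : Type} [Fintype V] [Fintype E]

/-- The one-step relation of the quiver. -/
def qrel (s t : E → V) : V → V → Prop := fun u v => ∃ e : E, s e = u ∧ t e = v

/-- From positive-definiteness of the Euler form, there is no arrow `a` ending at `i`
whose source is reachable from `i` (no oriented cycle through `i`). -/
theorem no_cycle (s t : E → V)
    (hDynkin : ∀ d : V → ℤ, d ≠ 0 → 0 < euler s t d d) (i : V) (a : E)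
    (hta : t a = i) : ¬ Relation.ReflTransGen (qrel s t) i (s a) := by
  classical
  intro hR
  set R := Relation.ReflTransGen (qrel s t) with hRdef
  set Sset : Finset V := Finset.univ.filter (fun v => R i v ∧ R v i) with hSdef
  have hmem : ∀ v, v ∈ Sset ↔ (R i v ∧ R v i) := by
    intro v; simp [hSdef]
  have hiS : i ∈ Sset := (hmem i).mpr ⟨Relation.ReflTransGen.refl, Relation.ReflTransGen.refl⟩
  set A : Finset E := Finset.univ.filter (fun e => s e ∈ Sset ∧ t e ∈ Sset) with hAdef
  have key : ∀ v ∈ Sset, ∃ e ∈ A, s e = v := by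
    intro v hv
    obtain ⟨hiv, hvi⟩ := (hmem v).mp hv
    have hvsa : R v (s a) := hvi.trans hR
    have htg : Relation.TransGen (qrel s t) v i :=
      Relation.TransGen.tail' hvsa ⟨a, rfl, hta⟩
    obtain ⟨w, hvw, hwi⟩ := Relation.TransGen.head'_iff.mp htg
    obtain ⟨e, hse, hte⟩ := hvw
    refine ⟨e, ?_, hse⟩
    have hRiw : R i w := hiv.trans (Relation.ReflTransGen.single ⟨e, hse, hte⟩)
    have hwS : w ∈ Sset := (hmem w).mpr ⟨hRiw, hwi⟩
    simp only [hAdef, Finset.mem_filter, Finset.mem_univ, true_and]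
    exact ⟨by rw [hse]; exact hv, by rw [hte]; exact hwS⟩
  -- choose arrows: injective map Sset → A
  have hcard : Sset.card ≤ A.card := by
    choose f hfA hfs using key
    refine Finset.card_le_card_of_injOn
      (fun v => if h : v ∈ Sset then f v h else a) ?_ ?_
    · intro v hv; show (if h : v ∈ Sset then f v h else a) ∈ A; rw [dif_pos (Finset.mem_coe.mp hv)]; exact hfA v _
    · intro u hu v hv huv
      simp only [Finset.mem_coe] at hu hv
      simp only [dif_pos hu, dif_pos hv] at huv
      have := hfs u hu
      rw [huv, hfs v hv] at this
      exact this.symm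
  -- indicator function
  set d : V → ℤ := fun v => if v ∈ Sset then 1 else 0 with hddef
  have hd0 : d ≠ 0 := by
    intro h
    have := congrFun h i
    simp [hddef, hiS] at this
  have hpos := hDynkin d hd0
  have h1 : (∑ v, d v * d v) = (Sset.card : ℤ) := by
    have : ∀ v, d v * d v = if v ∈ Sset then (1:ℤ) else 0 := by
      intro v; by_cases h : v ∈ Sset <;> simp [hddef, h]
    rw [Finset.sum_congr rfl (fun v _ => this v), Finset.sum_boole]
    first
    | rfl
    | (congr 1; simp [hSdef])
  have h2 : (∑ e : E, d (s e) * d (t e)) = (A.card : ℤ) := by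
    have : ∀ e : E, d (s e) * d (t e) = if (s e ∈ Sset ∧ t e ∈ Sset) then (1:ℤ) else 0 := by
      intro e
      by_cases h1 : s e ∈ Sset <;> by_cases h2 : t e ∈ Sset <;> simp [hddef, h1, h2]
    rw [Finset.sum_congr rfl (fun e _ => this e), Finset.sum_boole]
  rw [euler, h1, h2] at hpos
  have : (Sset.card : ℤ) ≤ (A.card : ℤ) := Int.ofNat_le.mpr hcard
  omega

end Aux

section Aux2

variable {k V E : Type} [Field k] [Fintype V] [DecidableEq V] [Fintype E] {s t : E → V}

/-- Euler form against `Pi.single i 1` on the right. -/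
theorem euler_single_right [Fintype V] [Fintype E] (d : V → ℤ) (i : V) :
    euler s t d (Pi.single i 1) = d i - ∑ a : E, if t a = i then d (s a) else 0 := by
  rw [euler]
  congr 1
  · have h1 : ∀ v : V, d v * (Pi.single i 1 : V → ℤ) v = if v = i then d v else 0 := by
      intro v
      rw [Pi.single_apply]
      by_cases h : v = i <;> simp [h]
    rw [Finset.sum_congr rfl (fun v _ => h1 v), Finset.sum_ite_eq']
    simp
  · refine Finset.sum_congr rfl (fun a _ => ?_)
    rw [Pi.single_apply]
    by_cases h : t a = i <;> simp [h]

/-- Euler form against `Pi.single i 1` on the left. -/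
theorem euler_single_left [Fintype V] [Fintype E] (d : V → ℤ) (i : V) :
    euler s t (Pi.single i 1) d = d i - ∑ a : E, if s a = i then d (t a) else 0 := by
  rw [euler]
  congr 1
  · have h1 : ∀ v : V, (Pi.single i 1 : V → ℤ) v * d v = if v = i then d v else 0 := by
      intro v
      rw [Pi.single_apply]
      by_cases h : v = i <;> simp [h]
    rw [Finset.sum_congr rfl (fun v _ => h1 v), Finset.sum_ite_eq']
    simp
  · refine Finset.sum_congr rfl (fun a _ => ?_)
    rw [Pi.single_apply]
    by_cases h : s a = i <;> simp [h]

open Classical in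
/-- The subrepresentation spanned by all vertices reachable from `i`. -/
noncomputable def reachSub (M : QuiverRep k V E s t) (i : V) : Sub M where
  S v := if Relation.ReflTransGen (qrel s t) i v then ⊤ else ⊥
  compat e x hx := by
    by_cases h : Relation.ReflTransGen (qrel s t) i (s e)
    · have h' : Relation.ReflTransGen (qrel s t) i (t e) :=
        h.tail ⟨e, rfl, rfl⟩
      simp [h']
    · simp only [if_neg h, Submodule.mem_bot] at hx
      subst hx
      simp

theorem reachSub_dimv_pos (M : QuiverRep k V E s t) {i v : V}
    (h : Relation.ReflTransGen (qrel s t) i v) :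
    (reachSub M i).dimv v = M.dimv v := by
  classical
  have hS : (reachSub M i).S v = ⊤ := by
    show (if Relation.ReflTransGen (qrel s t) i v then (⊤ : Submodule k (M.carrier v)) else ⊥) = ⊤
    simp [h]
  rw [Sub.dimv, hS]
  exact finrank_top k (M.carrier v)

theorem reachSub_dimv_neg (M : QuiverRep k V E s t) {i v : V}
    (h : ¬ Relation.ReflTransGen (qrel s t) i v) :
    (reachSub M i).dimv v = 0 := by
  classical
  have hS : (reachSub M i).S v = ⊥ := by
    show (if Relation.ReflTransGen (qrel s t) i v then (⊤ : Submodule k (M.carrier v)) else ⊥) = ⊥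
    simp [h]
  rw [Sub.dimv, hS]
  exact finrank_bot k (M.carrier v)

end Aux2

/-- Let `Q` be a Dynkin quiver, `M` an indecomposable `kQ`-module with
dimension vector `m = dim M`, and `i` a vertex.  Then for every submodule `N ⊆ M` one has
`⟨dim N, dim Sᵢ⟩ + ⟨dim Sᵢ, dim(M/N)⟩ ≤ mᵢ`, and for each vertex `i` there is a submodule
for which equality holds.  (Here `dim(M/N) = dim M − dim N` componentwise.) -/
theorem euler_form_denominator_estimate
    {k V E : Type} [Field k] [Fintype V] [DecidableEq V] [Fintype E] (s t : E → V)
    (hDynkin : ∀ d : V → ℤ, d ≠ 0 → 0 < euler s t d d)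
    (M : QuiverRep k V E s t) (hM : Indec M) (i : V) :
    (∀ N : Sub M,
      euler s t (fun v => (N.dimv v : ℤ)) (Pi.single i 1) +
        euler s t (Pi.single i 1) (fun v => (M.dimv v : ℤ) - (N.dimv v : ℤ)) ≤
      (M.dimv i : ℤ)) ∧
    (∃ N : Sub M,
      euler s t (fun v => (N.dimv v : ℤ)) (Pi.single i 1) +
        euler s t (Pi.single i 1) (fun v => (M.dimv v : ℤ) - (N.dimv v : ℤ)) =
      (M.dimv i : ℤ)) := by
  classical
  constructor
  · intro N
    rw [euler_single_right, euler_single_left]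
    have hsum1 : 0 ≤ ∑ a : E, if t a = i then ((N.dimv (s a) : ℤ)) else 0 := by
      refine Finset.sum_nonneg (fun a _ => ?_)
      split <;> positivity
    have hsum2 : 0 ≤ ∑ a : E, if s a = i then ((M.dimv (t a) : ℤ) - (N.dimv (t a) : ℤ)) else 0 := by
      refine Finset.sum_nonneg (fun a _ => ?_)
      split
      · have : N.dimv (t a) ≤ M.dimv (t a) := Submodule.finrank_le _
        omega
      · exact le_rfl
    linarith [hsum1, hsum2]
  · refine ⟨reachSub M i, ?_⟩
    rw [euler_single_right, euler_single_left]
    have hR : Relation.ReflTransGen (qrel s t) i i := Relation.ReflTransGen.refl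
    have hNi : ((reachSub M i).dimv i : ℤ) = (M.dimv i : ℤ) := by
      rw [reachSub_dimv_pos M hR]
    have hsum1 : (∑ a : E, if t a = i then (((reachSub M i).dimv (s a) : ℤ)) else 0) = 0 := by
      refine Finset.sum_eq_zero (fun a _ => ?_)
      split
      · next h =>
          have hnc := no_cycle s t hDynkin i a h
          rw [reachSub_dimv_neg M hnc]
          rfl
      · rfl
    have hsum2 : (∑ a : E, if s a = i
        then ((M.dimv (t a) : ℤ) - ((reachSub M i).dimv (t a) : ℤ)) else 0) = 0 := by
      refine Finset.sum_eq_zero (fun a _ => ?_)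
      split
      · next h =>
          have hr : Relation.ReflTransGen (qrel s t) i (t a) := by
            rw [← h]
            exact Relation.ReflTransGen.single ⟨a, rfl, rfl⟩
          rw [reachSub_dimv_pos M hr]
          ring
      · rfl
    rw [hsum1, hsum2, hNi]
    ring
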